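/- Let {E_1, …, E_m} be a unitary error set on ℂ^N, let G be an N×K complex matrix with K ≤ N, and suppose the N×(Km) matrix X = Σ_{i=1}^m E_i G ⊗ ⟨i| is a δ-approximate isometry for some δ ≥ 0. Then G is itself a δ-approximate isometry. -/

import Mathlib

open scoped Kronecker ComplexOrder
open Matrix MeasureTheory ProbabilityTheory

noncomputable section

/-- The Euclidean (ℓ²) norm of a finitely indexed complex vector. -/
def enorm2 {ι : Type*} [Fintype ι] (x : ι → ℂ) : ℝ :=
  Real.sqrt (∑ i, ‖x i‖ ^ 2)

/-- `T` is a `δ`-approximate isometry: every singular value lies in `[1-δ, 1+δ]`,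
equivalently `(1-δ)‖c‖ ≤ ‖Tc‖ ≤ (1+δ)‖c‖` for every vector `c`. -/
def IsApproxIsometry {ι κ : Type*} [Fintype ι] [Fintype κ] (δ : ℝ) (T : Matrix ι κ ℂ) : Prop :=
  ∀ c : κ → ℂ,
    (1 - δ) * enorm2 c ≤ enorm2 (T.mulVec c) ∧ enorm2 (T.mulVec c) ≤ (1 + δ) * enorm2 c

/-- A unitary error set: each `E i` is unitary and `tr((E i)ᴴ E j) = 0` for `i ≠ j`. -/
def IsUnitaryErrorSet {ι : Type*} {N : ℕ} (E : ι → Matrix (Fin N) (Fin N) ℂ) : Prop :=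
  (∀ i, (E i)ᴴ * E i = 1 ∧ E i * (E i)ᴴ = 1) ∧
    ∀ i j : ι, i ≠ j → ((E i)ᴴ * E j).trace = 0

/-- The `N × (Km)` matrix `Y = Σ_i E_i V ⊗ ⟨i|`, whose column indexed by `(j, i)`
is the vector `E_i · V · e_j`. -/
def shiftMat {N K m : ℕ} (E : Fin m → Matrix (Fin N) (Fin N) ℂ) (V : Matrix (Fin N) (Fin K) ℂ) :
    Matrix (Fin N) (Fin K × Fin m) ℂ :=
  Matrix.of fun a ji => (E ji.2 * V) a ji.1

/-- The operator norm (largest singular value) of a complex matrix. -/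
def opNorm {ι κ : Type*} [Fintype ι] [Fintype κ] (A : Matrix ι κ ℂ) : ℝ :=
  sSup {r | ∃ c : κ → ℂ, enorm2 c = 1 ∧ r = enorm2 (A.mulVec c)}

/-- The smallest singular value of a (tall) complex matrix. -/
def sMin {ι κ : Type*} [Fintype ι] [Fintype κ] (A : Matrix ι κ ℂ) : ℝ :=
  sInf {r | ∃ c : κ → ℂ, enorm2 c = 1 ∧ r = enorm2 (A.mulVec c)}

/-- The positive semidefinite square root of a positive semidefinite matrix
(the definition `Matrix.PosSemidef.sqrt` of the older Mathlib, since removed). -/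
def Matrix.PosSemidef.sqrt {n 𝕜 : Type*} [RCLike 𝕜] [Fintype n] [DecidableEq n]
    {A : Matrix n n 𝕜} (hA : A.PosSemidef) : Matrix n n 𝕜 :=
  hA.1.eigenvectorUnitary.1 * diagonal ((↑) ∘ (√·) ∘ hA.1.eigenvalues) *
    (star hA.1.eigenvectorUnitary : Matrix n n 𝕜)

/-- `isometrize G = G (GᴴG)^{-1/2}`: round all singular values of `G` to `1`. -/
def isometrize {N K : ℕ} (G : Matrix (Fin N) (Fin K) ℂ) : Matrix (Fin N) (Fin K) ℂ :=
  G * ((Matrix.posSemidef_conjTranspose_mul_self G).sqrt)⁻¹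

/-- Round the singular values of a wide matrix `D̂` to one: `(D̂ D̂ᴴ)^{-1/2} D̂`. -/
def coisometrize {ι : Type*} [Fintype ι] [DecidableEq ι] {N : ℕ}
    (Dhat : Matrix ι (Fin N) ℂ) : Matrix ι (Fin N) ℂ :=
  ((Matrix.posSemidef_self_mul_conjTranspose Dhat).sqrt)⁻¹ * Dhat

end

/-- if `X = Σ_i E_i G ⊗ ⟨i|` is a `δ`-approximate isometry, then so is `G`. -/
theorem stmt_11 {N K m : ℕ} (hK : 0 < K) (hm : 0 < m) (hKN : K ≤ N)
    (E : Fin m → Matrix (Fin N) (Fin N) ℂ) (hE : IsUnitaryErrorSet E)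
    (G : Matrix (Fin N) (Fin K) ℂ)
    (δ : ℝ) (hδ0 : 0 ≤ δ)
    (hX : IsApproxIsometry δ (shiftMat E G)) :
    IsApproxIsometry δ G := by
  intro c
  set i₀ : Fin m := ⟨0, hm⟩
  set c' : Fin K × Fin m → ℂ := fun ji => if ji.2 = i₀ then c ji.1 else 0 with hc'
  -- enorm2 c' = enorm2 c
  have hnorm : enorm2 c' = enorm2 c := by
    unfold enorm2
    congr 1
    rw [Fintype.sum_prod_type]
    refine Finset.sum_congr rfl fun j _ => ?_
    rw [Finset.sum_eq_single i₀]
    · simp [hc']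
    · intro b _ hb
      simp [hc', hb]
    · simp
  -- shiftMat mulVec c' = (E i₀ * G).mulVec c
  have hmv : (shiftMat E G).mulVec c' = (E i₀ * G).mulVec c := by
    funext a
    simp only [Matrix.mulVec, dotProduct, shiftMat, Matrix.of_apply]
    rw [Fintype.sum_prod_type]
    refine Finset.sum_congr rfl fun j _ => ?_
    rw [Finset.sum_eq_single i₀]
    · simp [hc']
    · intro b _ hb
      simp [hc', hb]
    · simp
  -- unitary preserves enorm2
  have hdot : ∀ {ι : Type} [Fintype ι] (x : ι → ℂ), ∑ i, ‖x i‖ ^ 2 = (star x ⬝ᵥ x).re := by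
    intro ι _ x
    simp only [dotProduct, Pi.star_apply, Complex.re_sum]
    congr 1
    funext i
    rw [Complex.star_def]
    simp only [Complex.mul_re, Complex.conj_re, Complex.conj_im,
      Complex.sq_norm, Complex.normSq_apply]
    ring
  have hunit : enorm2 ((E i₀ * G).mulVec c) = enorm2 (G.mulVec c) := by
    unfold enorm2
    congr 1
    rw [hdot, hdot]
    congr 1
    have h1 : (E i₀ * G).mulVec c = (E i₀).mulVec (G.mulVec c) := by
      rw [Matrix.mulVec_mulVec]
    rw [h1, Matrix.star_mulVec, dotProduct_mulVec, Matrix.vecMul_vecMul,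
      ← dotProduct_mulVec, Matrix.mulVec_mulVec, (hE.1 i₀).1, Matrix.one_mul]
  have := hX c'
  rw [hnorm, hmv, hunit] at this
  exact this
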